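/- Let 𝒞=(C,w) be a positive-weighted tree with V(C)={1,...,n} and let a,b be two vertices such that D_{a,b}(𝒞) − t_a − t_b = max_{i,j ∈ [n]} { D_{i,j}(𝒞) − t_i − t_j }. Then C is a caterpillar if and only if for all distinct i,j ∈ {1,...,n}∖{a,b} one has D_{a,b}(𝒞)+D_{i,j}(𝒞) ≥ max{ D_{a,i}(𝒞)+D_{b,j}(𝒞), D_{a,j}(𝒞)+D_{b,i}(𝒞) }. -/

import Mathlib

open SimpleGraph

variable {V : Type*}

/-- weight of a walk: sum of the weights of its edges -/
noncomputable def walkWeight (G : SimpleGraph V) (w : Sym2 V → ℝ) {i j : V} (p : G.Walk i j) : ℝ :=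
  (p.edges.map w).sum

/-- the 2-weight: min over paths joining i and j -/
noncomputable def wdist (G : SimpleGraph V) (w : Sym2 V → ℝ) (i j : V) : ℝ :=
  sInf {x : ℝ | ∃ p : G.Walk i j, p.IsPath ∧ walkWeight G w p = x}

def Realizes (G : SimpleGraph V) (w : Sym2 V → ℝ) {i j : V} (p : G.Walk i j) : Prop :=
  p.IsPath ∧ walkWeight G w p = wdist G w i j

def UsefulEdge (G : SimpleGraph V) (w : Sym2 V → ℝ) (e : Sym2 V) : Prop :=
  ∃ a b : V, a ≠ b ∧ ∀ p : G.Walk a b, Realizes G w p → e ∈ p.edges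

def Pruned (G : SimpleGraph V) (w : Sym2 V → ℝ) : Prop :=
  ∀ e ∈ G.edgeSet, UsefulEdge G w e

def PosWeights (G : SimpleGraph V) (w : Sym2 V → ℝ) : Prop :=
  ∀ e ∈ G.edgeSet, 0 < w e

def Indec (G : SimpleGraph V) (w : Sym2 V → ℝ) (i j : V) : Prop :=
  ∀ z : V, z ≠ i → z ≠ j → wdist G w i j < wdist G w i z + wdist G w z j

def IsLeaf (G : SimpleGraph V) (v : V) : Prop := (G.neighborSet v).ncard = 1

def IsSnake (G : SimpleGraph V) : Prop :=
  G.IsTree ∧ {v : V | IsLeaf G v}.ncard = 2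

def IsCaterpillar (G : SimpleGraph V) : Prop :=
  G.IsTree ∧ ∃ (x₁ x₂ : V) (p : G.Walk x₁ x₂), p.IsPath ∧
    {v : V | v ∈ p.support} = {v : V | 2 ≤ (G.neighborSet v).ncard}

def IsPolygon {n : ℕ} [NeZero n] (G : SimpleGraph (Fin n)) : Prop :=
  ∃ σ : Equiv.Perm (Fin n), G.edgeSet = Set.range (fun i : Fin n => s(σ i, σ (i + 1)))

noncomputable def tmin (G : SimpleGraph V) (w : Sym2 V → ℝ) (x : V) : ℝ :=
  (1 / 2) * sInf {r : ℝ | ∃ y z : V, y ≠ x ∧ z ≠ x ∧ y ≠ z ∧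
    r = wdist G w x y + wdist G w x z - wdist G w y z}

def IsBipartiteOn (G : SimpleGraph V) (X Y : Set V) : Prop :=
  X ∩ Y = ∅ ∧ X ∪ Y = Set.univ ∧ ∀ a b : V, G.Adj a b → (a ∈ X ∧ b ∈ Y) ∨ (a ∈ Y ∧ b ∈ X)

noncomputable def chainSum {α : Type*} (D : α → α → ℝ) : List α → ℝ
  | [] => 0
  | [_] => 0
  | a :: b :: l => D a b + chainSum D (b :: l)

def FIndec {n : ℕ} (D : Fin n → Fin n → ℝ) (i j : Fin n) : Prop :=
  ∀ z : Fin n, z ≠ i → z ≠ j → D i j < D i z + D z j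

def TriangleIneq {n : ℕ} (D : Fin n → Fin n → ℝ) : Prop :=
  ∀ i j k : Fin n, i ≠ j → j ≠ k → i ≠ k → D i j ≤ D i k + D k j

def MaxTwice (x y z : ℝ) : Prop :=
  (x = y ∧ z ≤ x) ∨ (x = z ∧ y ≤ x) ∨ (y = z ∧ x ≤ y)

def FourPoint {n : ℕ} (D : Fin n → Fin n → ℝ) : Prop :=
  ∀ i j k h : Fin n, i ≠ j → i ≠ k → i ≠ h → j ≠ k → j ≠ h → k ≠ h →
    MaxTwice (D i j + D k h) (D i k + D j h) (D i h + D k j)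

def MedianFamily {n : ℕ} (D : Fin n → Fin n → ℝ) : Prop :=
  ∀ a b c : Fin n, ∃! m : Fin n,
    ∀ i ∈ ({a, b, c} : Set (Fin n)), ∀ j ∈ ({a, b, c} : Set (Fin n)), i ≠ j →
      D i j = D i m + D j m

noncomputable def tminF {n : ℕ} (D : Fin n → Fin n → ℝ) (x : Fin n) : ℝ :=
  (1 / 2) * sInf {r : ℝ | ∃ y z : Fin n, y ≠ x ∧ z ≠ x ∧ y ≠ z ∧ r = D x y + D x z - D y z}

def interiorSet {G : SimpleGraph V} {u v : V} (p : G.Walk u v) : Set V :=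
  {x : V | x ∈ p.support ∧ x ≠ u ∧ x ≠ v}

/- ===================== auxiliary development ===================== -/

section Aux

variable {G : SimpleGraph V} {w : Sym2 V → ℝ}

lemma walkWeight_append' {i j k : V} (p : G.Walk i j) (q : G.Walk j k) :
    walkWeight G w (p.append q) = walkWeight G w p + walkWeight G w q := by
  simp [walkWeight, Walk.edges_append]

lemma wdist_eq (ht : G.IsTree) {i j : V} (p : G.Walk i j) (hp : p.IsPath) :
    wdist G w i j = walkWeight G w p := by
  have hu := ht.existsUnique_path i j
  have hset : {x : ℝ | ∃ q : G.Walk i j, q.IsPath ∧ walkWeight G w q = x}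
      = {walkWeight G w p} := by
    ext x
    constructor
    · rintro ⟨q, hq, rfl⟩
      simp [hu.unique hq hp]
    · rintro rfl
      exact ⟨p, hp, rfl⟩
  rw [wdist, hset, csInf_singleton]

lemma wdist_self (ht : G.IsTree) (i : V) : wdist G w i i = 0 := by
  rw [wdist_eq ht Walk.nil Walk.IsPath.nil]
  simp [walkWeight]

lemma wdist_comm (ht : G.IsTree) (i j : V) : wdist G w i j = wdist G w j i := by
  obtain ⟨p, hp, -⟩ := ht.existsUnique_path i j
  rw [wdist_eq ht p hp, wdist_eq ht p.reverse hp.reverse]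
  simp [walkWeight, Walk.edges_reverse, List.map_reverse, List.sum_reverse]

lemma walkWeight_nonneg (hw : PosWeights G w) {i j : V} (p : G.Walk i j) :
    0 ≤ walkWeight G w p := by
  apply List.sum_nonneg
  intro x hx
  obtain ⟨e, he, rfl⟩ := List.mem_map.mp hx
  exact (hw e (p.edges_subset_edgeSet he)).le

lemma wdist_nonneg (ht : G.IsTree) (hw : PosWeights G w) (i j : V) :
    0 ≤ wdist G w i j := by
  obtain ⟨p, hp, -⟩ := ht.existsUnique_path i j
  rw [wdist_eq ht p hp]
  exact walkWeight_nonneg hw p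

lemma wdist_pos (ht : G.IsTree) (hw : PosWeights G w) {i j : V} (hij : i ≠ j) :
    0 < wdist G w i j := by
  obtain ⟨p, hp, -⟩ := ht.existsUnique_path i j
  rw [wdist_eq ht p hp]
  cases p with
  | nil => exact absurd rfl hij
  | cons h q =>
    rename_i x
    have h1 : 0 < w s(i, x) := hw _ h
    have h2 : 0 ≤ walkWeight G w q := walkWeight_nonneg hw q
    simp only [walkWeight, Walk.edges_cons, List.map_cons, List.sum_cons]
    exact add_pos_of_pos_of_nonneg h1 h2

lemma eq_of_wdist_nonpos (ht : G.IsTree) (hw : PosWeights G w) {i j : V}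
    (h : wdist G w i j ≤ 0) : i = j := by
  by_contra hij
  exact absurd h (not_le.mpr (wdist_pos ht hw hij))

lemma sum_le_of_subset {l1 l2 : List (Sym2 V)} (hnd : l1.Nodup) (hsub : l1 ⊆ l2)
    (hpos : ∀ e ∈ l2, 0 ≤ w e) : (l1.map w).sum ≤ (l2.map w).sum := by
  obtain ⟨l, hperm, hsl⟩ := List.subperm_of_subset hnd hsub
  have h1 : (l1.map w).sum = (l.map w).sum := (List.Perm.sum_eq (List.Perm.map w hperm)).symm
  rw [h1]
  apply List.Sublist.sum_le_sum (List.Sublist.map w hsl)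
  intro x hx
  obtain ⟨e, he, rfl⟩ := List.mem_map.mp hx
  exact hpos e he

lemma isPath_edge {x y : V} (h : G.Adj x y) : (Walk.cons h Walk.nil).IsPath := by
  simp [Walk.isPath_def, h.ne]

lemma wdist_edge (ht : G.IsTree) {x y : V} (h : G.Adj x y) :
    wdist G w x y = w s(x, y) := by
  rw [wdist_eq ht _ (isPath_edge h)]
  simp [walkWeight]

lemma wdist_two (ht : G.IsTree) {x y z : V} (hxy : G.Adj x y) (hyz : G.Adj y z)
    (hxz : x ≠ z) : wdist G w x z = w s(x, y) + w s(y, z) := by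
  have hp : (Walk.cons hxy (Walk.cons hyz Walk.nil)).IsPath := by
    simp [Walk.isPath_def, hxy.ne, hyz.ne, hxz]
  rw [wdist_eq ht _ hp]
  simp [walkWeight]

section DecEq

variable [DecidableEq V]

lemma wdist_add_of_mem (ht : G.IsTree) {i j m : V} (p : G.Walk i j)
    (hp : p.IsPath) (hm : m ∈ p.support) :
    wdist G w i j = wdist G w i m + wdist G w m j := by
  rw [wdist_eq ht p hp, wdist_eq ht (p.takeUntil m hm) (hp.takeUntil hm),
    wdist_eq ht (p.dropUntil m hm) (hp.dropUntil hm), ← walkWeight_append']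
  rw [Walk.take_spec p hm]

lemma wdist_triangle (ht : G.IsTree) (hw : PosWeights G w) (i k j : V) :
    wdist G w i j ≤ wdist G w i k + wdist G w k j := by
  obtain ⟨p, hp, -⟩ := ht.existsUnique_path i k
  obtain ⟨q, hq, -⟩ := ht.existsUnique_path k j
  rw [wdist_eq ht p hp, wdist_eq ht q hq]
  have hb := (p.append q).bypass_isPath
  rw [wdist_eq ht _ hb, ← walkWeight_append']
  exact sum_le_of_subset hb.isTrail.edges_nodup (Walk.edges_bypass_subset _)
    (fun e he => (hw e ((p.append q).edges_subset_edgeSet he)).le)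

lemma support_subset_of_mem (ht : G.IsTree) {s e : V} (p : G.Walk s e) (hp : p.IsPath)
    {u v : V} (hu : u ∈ p.support) (hv : v ∈ p.support)
    (q : G.Walk u v) (hq : q.IsPath) : q.support ⊆ p.support := by
  have hsplit : v ∈ (p.takeUntil u hu).support ∨ v ∈ (p.dropUntil u hu).support := by
    have := Walk.take_spec p hu
    rw [← this] at hv
    exact (Walk.mem_support_append_iff _ _).mp hv
  rcases hsplit with hv' | hv'
  · have hr : (((p.takeUntil u hu).dropUntil v hv')).IsPath :=
      (hp.takeUntil hu).dropUntil hv'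
    have hqe : q = ((p.takeUntil u hu).dropUntil v hv').reverse :=
      (ht.existsUnique_path u v).unique hq hr.reverse
    rw [hqe]
    intro x hx
    rw [Walk.support_reverse, List.mem_reverse] at hx
    exact (p.support_takeUntil_subset hu) (Walk.support_dropUntil_subset _ hv' hx)
  · have hr : (((p.dropUntil u hu).takeUntil v hv')).IsPath :=
      (hp.dropUntil hu).takeUntil hv'
    have hqe : q = (p.dropUntil u hu).takeUntil v hv' :=
      (ht.existsUnique_path u v).unique hq hr
    rw [hqe]
    intro x hx
    exact (p.support_dropUntil_subset hu) (Walk.support_takeUntil_subset _ hv' hx)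

lemma tricho (ht : G.IsTree) {s e : V} (p : G.Walk s e) (hp : p.IsPath)
    {u v : V} (hu : u ∈ p.support) (hv : v ∈ p.support) :
    (∃ q : G.Walk s v, q.IsPath ∧ u ∈ q.support) ∨
    (∃ q : G.Walk s u, q.IsPath ∧ v ∈ q.support) := by
  have hsplit : v ∈ (p.takeUntil u hu).support ∨ v ∈ (p.dropUntil u hu).support := by
    have := Walk.take_spec p hu
    rw [← this] at hv
    exact (Walk.mem_support_append_iff _ _).mp hv
  rcases hsplit with hv' | hv'
  · exact Or.inr ⟨p.takeUntil u hu, hp.takeUntil hu, hv'⟩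
  · left
    refine ⟨(p.takeUntil u hu).append ((p.dropUntil u hu).takeUntil v hv'), ?_, ?_⟩
    · apply Walk.IsPath.of_append_left (q := (p.dropUntil u hu).dropUntil v hv')
      rw [← Walk.append_assoc, Walk.take_spec, Walk.take_spec]
      exact hp
    · rw [Walk.mem_support_append_iff]
      exact Or.inl (Walk.end_mem_support _)

lemma isPath_append' {u v x : V} {p : G.Walk u v} {r : G.Walk v x}
    (hp : p.IsPath) (hr : r.IsPath)
    (h : ∀ y ∈ p.support, y ∈ r.support → y = v) : (p.append r).IsPath := by
  rw [Walk.isPath_def, Walk.support_append]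
  apply List.Nodup.append hp.support_nodup (hr.support_nodup.tail)
  intro y hy hy'
  have hyr : y ∈ r.support := List.mem_of_mem_tail hy'
  have hyv : y = v := h y hy hyr
  subst hyv
  have hnd := hr.support_nodup
  rw [r.support_eq_cons] at hnd
  exact (List.nodup_cons.mp hnd).1 hy'

lemma exit_lemma {c a : V} (q : G.Walk c a) (S : Set V) (ha : a ∈ S) :
    ∃ m, ∃ hm : m ∈ q.support, m ∈ S ∧
      ∀ u ∈ (q.takeUntil m hm).support, u ∈ S → u = m := by
  induction q with
  | nil =>
    refine ⟨_, Walk.start_mem_support _, ha, ?_⟩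
    intro u hu _
    have := Walk.support_takeUntil_subset _ _ hu
    simpa using this
  | @cons c d a r q ih =>
    by_cases hc : c ∈ S
    · refine ⟨c, Walk.start_mem_support _, hc, ?_⟩
      intro u hu _
      have htu : (Walk.cons r q).takeUntil c (Walk.start_mem_support _) = Walk.nil := by
        simp [Walk.takeUntil]
      rw [htu] at hu
      simpa using hu
    · obtain ⟨m, hm', hmS, hmin⟩ := ih ha
      have hm : m ∈ (Walk.cons r q).support := by
        rw [Walk.support_cons]; exact List.mem_cons_of_mem _ hm'
      have hcm : c ≠ m := fun h => hc (h ▸ hmS)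
      have htu : (Walk.cons r q).takeUntil m hm = Walk.cons r (q.takeUntil m hm') := by
        simp [Walk.takeUntil, dif_neg hcm]
      refine ⟨m, hm, hmS, ?_⟩
      intro u hu huS
      rw [htu, Walk.support_cons] at hu
      rcases List.mem_cons.mp hu with rfl | hu
      · exact absurd huS hc
      · exact hmin u hu huS

lemma nbr_unique (ht : G.IsTree) {c e : V} (p : G.Walk c e) (hp : p.IsPath)
    {z₁ z₂ : V} (h1 : G.Adj c z₁) (h2 : G.Adj c z₂)
    (m1 : z₁ ∈ p.support) (m2 : z₂ ∈ p.support) : z₁ = z₂ := by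
  have key : ∀ z, ∀ h : G.Adj c z, ∀ hm : z ∈ p.support, ([c, z] : List V) = p.support.take 2 := by
    intro z h hm
    have hq : (p.takeUntil z hm).IsPath := hp.takeUntil hm
    have heq : p.takeUntil z hm = Walk.cons h Walk.nil :=
      (ht.existsUnique_path c z).unique hq (isPath_edge h)
    have hpre : (p.takeUntil z hm).support <+: p.support :=
      ⟨(p.dropUntil z hm).support.tail, by rw [← Walk.support_append, Walk.take_spec]⟩
    rw [heq] at hpre
    have hpre' : ([c, z] : List V) <+: p.support := by simpa using hpre
    have := List.prefix_iff_eq_take.mp hpre'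
    simpa using this
  have e1 := key z₁ h1 m1
  have e2 := key z₂ h2 m2
  rw [← e1] at e2
  simpa using e2.symm

lemma interior_deg [Finite V] {u v x : V} (p : G.Walk u v) (hp : p.IsPath)
    (hx : x ∈ p.support) (hxu : x ≠ u) (hxv : x ≠ v) : 2 ≤ (G.neighborSet x).ncard := by
  have hnodup : ((p.takeUntil x hx).support ++ (p.dropUntil x hx).support.tail).Nodup := by
    rw [← Walk.support_append, Walk.take_spec]
    exact hp.support_nodup
  obtain ⟨s₂, hadj2, hs₂⟩ : ∃ s₂, G.Adj x s₂ ∧ s₂ ∈ (p.dropUntil x hx).support.tail := by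
    cases hq : p.dropUntil x hx with
    | nil => exact absurd rfl hxv
    | cons h t => exact ⟨_, h, by simp⟩
  obtain ⟨s₁, hadj1, hs₁⟩ : ∃ s₁, G.Adj x s₁ ∧ s₁ ∈ (p.takeUntil x hx).support := by
    cases hq : (p.takeUntil x hx).reverse with
    | nil => exact absurd rfl hxu
    | cons h t =>
      rename_i s
      refine ⟨s, h, ?_⟩
      have hmem : s ∈ (p.takeUntil x hx).reverse.support := by rw [hq]; simp
      rwa [Walk.support_reverse, List.mem_reverse] at hmem
  have hne : s₁ ≠ s₂ := by
    intro h
    subst h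
    exact (List.disjoint_of_nodup_append hnodup) hs₁ hs₂
  exact (Set.one_lt_ncard_iff (Set.toFinite _)).mpr ⟨s₁, s₂, hadj1, hadj2, hne⟩

lemma wdist_strict (ht : G.IsTree) (hw : PosWeights G w) {x y m : V}
    (p : G.Walk x y) (hp : p.IsPath) (hm : m ∉ p.support) :
    wdist G w x y < wdist G w x m + wdist G w m y := by
  obtain ⟨p1, hp1, -⟩ := ht.existsUnique_path x m
  obtain ⟨p2, hp2, -⟩ := ht.existsUnique_path m y
  have hB : (p1.append p2).bypass.IsPath := (p1.append p2).bypass_isPath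
  have hBp : (p1.append p2).bypass = p := (ht.existsUnique_path x y).unique hB hp
  have hxm : x ≠ m := fun h => hm (h ▸ p.start_mem_support)
  -- last edge of p1 is incident to m
  obtain ⟨q, hq, he⟩ : ∃ q, G.Adj m q ∧ s(m, q) ∈ p1.edges := by
    cases hr : p1.reverse with
    | nil => exact absurd rfl hxm
    | cons h t =>
      rename_i s
      refine ⟨s, h, ?_⟩
      have : s(m, s) ∈ p1.reverse.edges := by rw [hr]; simp
      rwa [Walk.edges_reverse, List.mem_reverse] at this
  set e := s(m, q) with hedef
  have heW : e ∈ (p1.append p2).edges := by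
    rw [Walk.edges_append]
    exact List.mem_append_left _ he
  have heB : e ∉ (p1.append p2).bypass.edges := by
    intro hcon
    have : m ∈ (p1.append p2).bypass.support :=
      Walk.fst_mem_support_of_mem_edges _ hcon
    rw [hBp] at this
    exact hm this
  have hperm : (p1.append p2).edges.Perm (e :: (p1.append p2).edges.erase e) :=
    List.perm_cons_erase heW
  have hsum : walkWeight G w (p1.append p2)
      = w e + (((p1.append p2).edges.erase e).map w).sum := by
    have := (hperm.map w).sum_eq
    simpa [walkWeight] using this
  have hble : walkWeight G w (p1.append p2).bypass
      ≤ (((p1.append p2).edges.erase e).map w).sum := by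
    apply sum_le_of_subset hB.isTrail.edges_nodup
    · intro y' hy'
      have hne : y' ≠ e := fun hne => heB (hne ▸ hy')
      exact (List.mem_erase_of_ne hne).mpr (Walk.edges_bypass_subset _ hy')
    · intro e' he'
      exact (hw e' ((p1.append p2).edges_subset_edgeSet (List.erase_subset he'))).le
  have hwe : 0 < w e := hw e (p1.edges_subset_edgeSet he)
  rw [wdist_eq ht p hp, wdist_eq ht p1 hp1, wdist_eq ht p2 hp2, ← hBp,
    ← walkWeight_append']
  calc walkWeight G w (p1.append p2).bypass
      ≤ (((p1.append p2).edges.erase e).map w).sum := hble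
    _ < walkWeight G w (p1.append p2) := by rw [hsum]; linarith

lemma mem_of_wdist_eq (ht : G.IsTree) (hw : PosWeights G w) {x y m : V}
    (p : G.Walk x y) (hp : p.IsPath)
    (h : wdist G w x y = wdist G w x m + wdist G w m y) : m ∈ p.support := by
  by_contra hm
  exact absurd h (ne_of_lt (wdist_strict ht hw p hp hm))

end DecEq

end Aux


section TminAux

variable {G : SimpleGraph V} {w : Sym2 V → ℝ} [DecidableEq V]

lemma tmin_eq [Finite V] (ht : G.IsTree) (hw : PosWeights G w) {x px : V}
    (hg : ∀ y, y ≠ x → ∀ q : G.Walk x y, q.IsPath → px ∈ q.support)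
    (hdeg : 2 ≤ (G.neighborSet px).ncard)
    (hcase : px = x ∨ G.Adj x px) :
    tmin G w x = wdist G w x px := by
  have htm : tmin G w x = (1 / 2) * sInf {r : ℝ | ∃ y z : V, y ≠ x ∧ z ≠ x ∧ y ≠ z ∧
      r = wdist G w x y + wdist G w x z - wdist G w y z} := rfl
  set T := {r : ℝ | ∃ y z : V, y ≠ x ∧ z ≠ x ∧ y ≠ z ∧
      r = wdist G w x y + wdist G w x z - wdist G w y z} with hT
  have hlow : ∀ r ∈ T, 2 * wdist G w x px ≤ r := by
    rintro r ⟨y, z, hy, hz, hyz, rfl⟩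
    obtain ⟨py, hpy, -⟩ := ht.existsUnique_path x y
    obtain ⟨pz, hpz, -⟩ := ht.existsUnique_path x z
    have h1 : wdist G w x y = wdist G w x px + wdist G w px y :=
      wdist_add_of_mem ht py hpy (hg y hy py hpy)
    have h2 : wdist G w x z = wdist G w x px + wdist G w px z :=
      wdist_add_of_mem ht pz hpz (hg z hz pz hpz)
    have h3 : wdist G w y z ≤ wdist G w y px + wdist G w px z := wdist_triangle ht hw y px z
    have h4 : wdist G w y px = wdist G w px y := wdist_comm ht y px
    linarith
  have hmem : 2 * wdist G w x px ∈ T := by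
    rcases hcase with rfl | hadj
    · obtain ⟨y, z, hy, hz, hyz⟩ := (Set.one_lt_ncard_iff (Set.toFinite _)).mp hdeg
      rw [SimpleGraph.mem_neighborSet] at hy hz
      refine ⟨y, z, hy.ne', hz.ne', hyz, ?_⟩
      have hxz : wdist G w y z = w s(y, px) + w s(px, z) :=
        wdist_two ht hy.symm hz hyz
      rw [wdist_edge ht hy, wdist_edge ht hz, wdist_self ht, hxz]
      rw [Sym2.eq_swap (a := y) (b := px)]
      ring
    · obtain ⟨s, t, hs, hts, hst⟩ := (Set.one_lt_ncard_iff (Set.toFinite _)).mp hdeg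
      rw [SimpleGraph.mem_neighborSet] at hs hts
      obtain ⟨z, hzadj, hzx⟩ : ∃ z, G.Adj px z ∧ z ≠ x := by
        by_cases h : s = x
        · exact ⟨t, hts, fun ht' => hst (h.trans ht'.symm)⟩
        · exact ⟨s, hs, h⟩
      refine ⟨px, z, hadj.ne', hzx, hzadj.ne, ?_⟩
      have h1 : wdist G w x px = w s(x, px) := wdist_edge ht hadj
      have h2 : wdist G w x z = w s(x, px) + w s(px, z) := wdist_two ht hadj hzadj hzx.symm
      have h3 : wdist G w px z = w s(px, z) := wdist_edge ht hzadj
      rw [h1, h2, h3]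
      ring
  have hbdd : BddBelow T := ⟨2 * wdist G w x px, fun r hr => hlow r hr⟩
  have hinf : sInf T = 2 * wdist G w x px :=
    le_antisymm (csInf_le hbdd hmem) (le_csInf ⟨_, hmem⟩ hlow)
  rw [htm, hinf]
  ring

lemma proj_exists [Fintype V] (ht : G.IsTree) (hw : PosWeights G w)
    (hcard : 3 ≤ Fintype.card V) (x : V) :
    ∃ px : V, (2 ≤ (G.neighborSet px).ncard) ∧
      (∀ y, y ≠ x → ∀ q : G.Walk x y, q.IsPath → px ∈ q.support) ∧
      (2 ≤ (G.neighborSet x).ncard → px = x) ∧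
      tmin G w x = wdist G w x px := by
  have hnontriv : Nontrivial V := Fintype.one_lt_card_iff_nontrivial.mp (by omega)
  by_cases hx2 : 2 ≤ (G.neighborSet x).ncard
  · have hg : ∀ y, y ≠ x → ∀ q : G.Walk x y, q.IsPath → x ∈ q.support :=
      fun y _ q _ => q.start_mem_support
    exact ⟨x, hx2, hg, fun _ => rfl, tmin_eq ht hw hg hx2 (Or.inl rfl)⟩
  · -- x is a leaf
    obtain ⟨y0, hy0⟩ := exists_ne x
    obtain ⟨p0, hp0, -⟩ := ht.existsUnique_path x y0
    obtain ⟨u, hu⟩ : ∃ u, G.Adj x u := by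
      cases p0 with
      | nil => exact absurd rfl hy0
      | cons h t => exact ⟨_, h⟩
    have hsingle : G.neighborSet x = {u} := by
      have h1 : 1 ≤ (G.neighborSet x).ncard := by
        rw [Nat.one_le_iff_ne_zero]
        intro h0
        have := (Set.ncard_eq_zero (Set.toFinite _)).mp h0
        rw [Set.eq_empty_iff_forall_notMem] at this
        exact this u hu
      have : (G.neighborSet x).ncard = 1 := by omega
      obtain ⟨a, ha⟩ := Set.ncard_eq_one.mp this
      have hua : u = a := by
        have := ha ▸ ((G.mem_neighborSet x u).mpr hu)
        simpa using this
      rw [ha, hua]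
    have hg : ∀ y, y ≠ x → ∀ q : G.Walk x y, q.IsPath → u ∈ q.support := by
      intro y hy q hq
      cases q with
      | nil => exact absurd rfl hy
      | cons h t =>
        rename_i v
        have : v ∈ G.neighborSet x := (G.mem_neighborSet x v).mpr h
        rw [hsingle] at this
        simp only [Set.mem_singleton_iff] at this
        subst this
        simp
    have hdegu : 2 ≤ (G.neighborSet u).ncard := by
      obtain ⟨z, hzx, hzu⟩ : ∃ z, z ≠ x ∧ z ≠ u := by
        by_contra hcon
        push_neg at hcon
        have hsub : (Finset.univ : Finset V) ⊆ {x, u} := by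
          intro z _
          by_cases h : z = x
          · simp [h]
          · simp [hcon z h]
        have := Finset.card_le_card hsub
        have h2 : ({x, u} : Finset V).card ≤ 2 := Finset.card_insert_le _ _ |>.trans (by simp)
        rw [Finset.card_univ] at this
        omega
      obtain ⟨pz, hpz, -⟩ := ht.existsUnique_path x z
      cases pz with
      | nil => exact absurd rfl hzx.symm
      | cons h t =>
        rename_i v
        have hvu : v = u := by
          have : v ∈ G.neighborSet x := (G.mem_neighborSet x v).mpr h
          rw [hsingle] at this
          simpa using this
        cases t with
        | nil => exact absurd hvu hzu
        | cons h2 t2 =>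
          rename_i v2
          have hv2x : v2 ≠ x := by
            intro hx
            subst hx
            have hnd := hpz.support_nodup
            simp [Walk.support_cons] at hnd
          exact (Set.one_lt_ncard_iff (Set.toFinite _)).mpr
            ⟨x, v2, (G.mem_neighborSet u x).mpr hu.symm,
              (G.mem_neighborSet u v2).mpr (hvu ▸ h2), fun hh => hv2x hh.symm⟩
    exact ⟨u, hdegu, hg, fun h => absurd h hx2, tmin_eq ht hw hg hdegu (Or.inr hu)⟩

end TminAux

/-- A positive-weighted tree `C` is a caterpillar iff, for `a, b` maximizing
`D i j - t i - t j`, one has `D a b + D i j ≥ max (D a i + D b j) (D a j + D b i)`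
for all distinct `i, j ∉ {a, b}`. -/
theorem stmt_4 {n : ℕ} (hn : 3 ≤ n) (C : SimpleGraph (Fin n)) (htree : C.IsTree)
    (w : Sym2 (Fin n) → ℝ) (hw : PosWeights C w)
    (a b : Fin n) (hab : a ≠ b)
    (hmax : ∀ i j : Fin n, i ≠ j →
      wdist C w i j - tmin C w i - tmin C w j ≤ wdist C w a b - tmin C w a - tmin C w b) :
    IsCaterpillar C ↔
      ∀ i j : Fin n, i ≠ j → i ≠ a → i ≠ b → j ≠ a → j ≠ b →
        max (wdist C w a i + wdist C w b j) (wdist C w a j + wdist C w b i) ≤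
          wdist C w a b + wdist C w i j := by
  classical
  have hcard : 3 ≤ Fintype.card (Fin n) := by simpa using hn
  choose π hdegπ hgate hfix htm using fun x => proj_exists htree hw hcard x
  have hπrev : ∀ x y, y ≠ x → ∀ q : C.Walk y x, q.IsPath → π x ∈ q.support := by
    intro x y hy q hq
    have := hgate x y hy q.reverse hq.reverse
    rwa [Walk.support_reverse, List.mem_reverse] at this
  have hF1 : ∀ x y, y ≠ x → wdist C w x y = wdist C w x (π x) + wdist C w (π x) y := by
    intro x y hy
    obtain ⟨q, hq, -⟩ := htree.existsUnique_path x y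
    exact wdist_add_of_mem htree q hq (hgate x y hy q hq)
  obtain ⟨pab, hpab, -⟩ := htree.existsUnique_path a b
  have ha'ab : π a ∈ pab.support := hgate a b (Ne.symm hab) pab hpab
  have hb'ab : π b ∈ pab.support := hπrev b a hab pab hpab
  obtain ⟨pab', hpab', -⟩ := htree.existsUnique_path (π a) (π b)
  have hsub' : pab'.support ⊆ pab.support :=
    support_subset_of_mem htree pab hpab ha'ab hb'ab pab' hpab'
  -- KEY: a vertex of degree ≥ 2 which is an endpoint of a path through π a, π b lies on pab'
  have key : ∀ c : Fin n, 2 ≤ (C.neighborSet c).ncard →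
      ((∃ q : C.Walk c (π b), q.IsPath ∧ π a ∈ q.support) ∨
       (∃ q : C.Walk c (π a), q.IsPath ∧ π b ∈ q.support)) → c ∈ pab'.support := by
    intro c hdegc hcases
    by_cases hca' : c = π a
    · rw [hca']; exact pab'.start_mem_support
    by_cases hcb' : c = π b
    · rw [hcb']; exact pab'.end_mem_support
    have htc : tmin C w c = 0 := by rw [htm c, hfix c hdegc, wdist_self htree]
    have hcb : c ≠ b := by
      intro h; subst h; exact hcb' (hfix c hdegc).symm
    have hca : c ≠ a := by
      intro h; subst h; exact hca' (hfix c hdegc).symm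
    rcases hcases with ⟨r, hr, ha'r⟩ | ⟨r, hr, hb'r⟩
    · obtain ⟨pcb, hpcb, -⟩ := htree.existsUnique_path c b
      have hb'cb : π b ∈ pcb.support := hπrev b c hcb pcb hpcb
      have ha'cb : π a ∈ pcb.support :=
        support_subset_of_mem htree pcb hpcb pcb.start_mem_support hb'cb r hr ha'r
      have e1 : wdist C w c b = wdist C w c (π a) + wdist C w (π a) b :=
        wdist_add_of_mem htree pcb hpcb ha'cb
      have e2 : wdist C w a b = wdist C w a (π a) + wdist C w (π a) b := hF1 a b (Ne.symm hab)
      have e3 : tmin C w a = wdist C w a (π a) := htm a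
      have hmax' := hmax c b hcb
      have hle : wdist C w c (π a) ≤ 0 := by linarith
      exact absurd (eq_of_wdist_nonpos htree hw hle) hca'
    · obtain ⟨pca, hpca, -⟩ := htree.existsUnique_path c a
      have ha'ca : π a ∈ pca.support := hπrev a c hca pca hpca
      have hb'ca : π b ∈ pca.support :=
        support_subset_of_mem htree pca hpca pca.start_mem_support ha'ca r hr hb'r
      have e1 : wdist C w c a = wdist C w c (π b) + wdist C w (π b) a :=
        wdist_add_of_mem htree pca hpca hb'ca
      have e2 : wdist C w b a = wdist C w b (π b) + wdist C w (π b) a := hF1 b a hab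
      have e3 : tmin C w b = wdist C w b (π b) := htm b
      have hc1 : wdist C w a b = wdist C w b a := wdist_comm htree a b
      have hmax' := hmax c a hca
      have hle : wdist C w c (π b) ≤ 0 := by linarith
      exact absurd (eq_of_wdist_nonpos htree hw hle) hcb'
  constructor
  · -- caterpillar → inequality
    rintro ⟨-, x₁, x₂, p, hp, hsupp⟩ i j hij hia hib hja hjb
    have hdegmem : ∀ v, v ∈ p.support ↔ 2 ≤ (C.neighborSet v).ncard :=
      fun v => by simpa using Set.ext_iff.mp hsupp v
    have ha'p : π a ∈ p.support := (hdegmem _).mpr (hdegπ a)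
    have hb'p : π b ∈ p.support := (hdegmem _).mpr (hdegπ b)
    have hx₁ : x₁ ∈ pab'.support :=
      key x₁ ((hdegmem x₁).mp p.start_mem_support) (tricho htree p hp ha'p hb'p)
    have ha'pr : π a ∈ p.reverse.support := by
      rw [Walk.support_reverse, List.mem_reverse]; exact ha'p
    have hb'pr : π b ∈ p.reverse.support := by
      rw [Walk.support_reverse, List.mem_reverse]; exact hb'p
    have hx₂ : x₂ ∈ pab'.support :=
      key x₂ ((hdegmem x₂).mp p.end_mem_support) (tricho htree p.reverse hp.reverse ha'pr hb'pr)
    have hp_sub : p.support ⊆ pab'.support :=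
      support_subset_of_mem htree pab' hpab' hx₁ hx₂ p hp
    obtain ⟨pij, hpij, -⟩ := htree.existsUnique_path i j
    have hm_ij : π i ∈ pij.support := hgate i j (Ne.symm hij) pij hpij
    have hm_p : π i ∈ pab.support := hsub' (hp_sub ((hdegmem _).mpr (hdegπ i)))
    have e1 : wdist C w a b = wdist C w a (π i) + wdist C w (π i) b :=
      wdist_add_of_mem htree pab hpab hm_p
    have e2 : wdist C w i j = wdist C w i (π i) + wdist C w (π i) j :=
      wdist_add_of_mem htree pij hpij hm_ij
    have t1 : wdist C w a i ≤ wdist C w a (π i) + wdist C w (π i) i :=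
      wdist_triangle htree hw a (π i) i
    have t2 : wdist C w b j ≤ wdist C w b (π i) + wdist C w (π i) j :=
      wdist_triangle htree hw b (π i) j
    have t3 : wdist C w a j ≤ wdist C w a (π i) + wdist C w (π i) j :=
      wdist_triangle htree hw a (π i) j
    have t4 : wdist C w b i ≤ wdist C w b (π i) + wdist C w (π i) i :=
      wdist_triangle htree hw b (π i) i
    have c1 : wdist C w (π i) i = wdist C w i (π i) := wdist_comm htree _ _
    have c2 : wdist C w b (π i) = wdist C w (π i) b := wdist_comm htree _ _
    apply max_le
    · linarith
    · linarith
  · -- inequality → caterpillar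
    intro hineq
    refine ⟨htree, π a, π b, pab', hpab', ?_⟩
    ext v
    simp only [Set.mem_setOf_eq]
    constructor
    · intro hv
      by_cases hva' : v = π a
      · rw [hva']; exact hdegπ a
      by_cases hvb' : v = π b
      · rw [hvb']; exact hdegπ b
      exact interior_deg pab' hpab' hv hva' hvb'
    · intro hv
      -- every vertex of degree ≥ 2 lies on pab
      have hS : ∀ c : Fin n, 2 ≤ (C.neighborSet c).ncard → c ∈ pab.support := by
        intro c hdegc
        by_contra hcS
        have hca : c ≠ a := fun h => hcS (h ▸ pab.start_mem_support)
        have hcb : c ≠ b := fun h => hcS (h ▸ pab.end_mem_support)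
        obtain ⟨q, hq, -⟩ := htree.existsUnique_path c a
        obtain ⟨m, hmq, hmS, hmin⟩ :=
          exit_lemma q {v : Fin n | v ∈ pab.support} pab.start_mem_support
        have hmc : m ≠ c := fun h => hcS (h ▸ hmS)
        have htkp : (q.takeUntil m hmq).IsPath := hq.takeUntil hmq
        have hWx : ∀ x, x ∈ pab.support → ∃ W : C.Walk c x, W.IsPath ∧ m ∈ W.support := by
          intro x hx
          obtain ⟨pmx, hpmx, -⟩ := htree.existsUnique_path m x
          have hint : ∀ y ∈ (q.takeUntil m hmq).support, y ∈ pmx.support → y = m := by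
            intro y hy hy'
            exact hmin y hy (support_subset_of_mem htree pab hpab hmS hx pmx hpmx hy')
          refine ⟨(q.takeUntil m hmq).append pmx, isPath_append' htkp hpmx hint, ?_⟩
          rw [Walk.mem_support_append_iff]
          exact Or.inl (Walk.end_mem_support _)
        have hdcx : ∀ x, x ∈ pab.support →
            wdist C w c x = wdist C w c m + wdist C w m x := by
          intro x hx
          obtain ⟨W, hW, hmW⟩ := hWx x hx
          exact wdist_add_of_mem htree W hW hmW
        obtain ⟨Wb, hWb, hmWb⟩ := hWx b pab.end_mem_support
        obtain ⟨y1, y2, hy1, hy2, hy12⟩ :=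
          (Set.one_lt_ncard_iff (Set.toFinite _)).mp hdegc
        rw [SimpleGraph.mem_neighborSet] at hy1 hy2
        obtain ⟨j, hjadj, hjW⟩ : ∃ j, C.Adj c j ∧ j ∉ Wb.support := by
          by_cases h1 : y1 ∈ Wb.support
          · by_cases h2 : y2 ∈ Wb.support
            · exact absurd (nbr_unique htree Wb hWb hy1 hy2 h1 h2) hy12
            · exact ⟨y2, hy2, h2⟩
          · exact ⟨y1, hy1, h1⟩
        have hjpab : j ∉ pab.support := by
          intro hj
          obtain ⟨Wj, hWj, hmWj⟩ := hWx j hj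
          have hWje : Wj = Walk.cons hjadj Walk.nil :=
            (htree.existsUnique_path c j).unique hWj (isPath_edge hjadj)
          rw [hWje] at hmWj
          simp only [Walk.support_cons, Walk.support_nil, List.mem_cons,
            List.mem_singleton, List.not_mem_nil, or_false] at hmWj
          rcases hmWj with h | h
          · exact hmc h
          · rw [h] at hmWb; exact hjW hmWb
        have hja : j ≠ a := fun h => hjpab (h ▸ pab.start_mem_support)
        have hjb : j ≠ b := fun h => hjpab (h ▸ pab.end_mem_support)
        have hin := hineq c j hjadj.ne hca hcb hja hjb
        have hle : wdist C w a c + wdist C w b j ≤ wdist C w a b + wdist C w c j :=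
          le_trans (le_max_left _ _) hin
        have g2 : wdist C w c a = wdist C w c m + wdist C w m a :=
          hdcx a pab.start_mem_support
        have g3 : wdist C w c b = wdist C w c m + wdist C w m b :=
          hdcx b pab.end_mem_support
        have hbj : (Wb.reverse.append (Walk.cons hjadj Walk.nil)).IsPath := by
          apply isPath_append' hWb.reverse (isPath_edge hjadj)
          intro y hy hy'
          rw [Walk.support_reverse, List.mem_reverse] at hy
          simp only [Walk.support_cons, Walk.support_nil, List.mem_cons,
            List.mem_singleton, List.not_mem_nil, or_false] at hy'
          rcases hy' with h | h
          · exact h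
          · rw [h] at hy; exact absurd hy hjW
        have hcmem : c ∈ (Wb.reverse.append (Walk.cons hjadj Walk.nil)).support := by
          rw [Walk.mem_support_append_iff]
          exact Or.inl (Walk.end_mem_support _)
        have g4 : wdist C w b j = wdist C w b c + wdist C w c j :=
          wdist_add_of_mem htree _ hbj hcmem
        have g5 : wdist C w a b = wdist C w a m + wdist C w m b :=
          wdist_add_of_mem htree pab hpab hmS
        have c1 : wdist C w a c = wdist C w c a := wdist_comm htree _ _
        have c2 : wdist C w b c = wdist C w c b := wdist_comm htree _ _
        have c3 : wdist C w m a = wdist C w a m := wdist_comm htree _ _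
        have hpos : 0 < wdist C w c m := wdist_pos htree hw (fun h => hmc h.symm)
        linarith
      have hvpab := hS v hv
      by_cases hva' : v = π a
      · rw [hva']; exact pab'.start_mem_support
      by_cases hvb' : v = π b
      · rw [hvb']; exact pab'.end_mem_support
      by_cases hva : v = a
      · exact absurd (hva.trans (hfix a (hva ▸ hv)).symm) hva'
      by_cases hvb : v = b
      · exact absurd (hvb.trans (hfix b (hvb ▸ hv)).symm) hvb'
      have e0 : wdist C w a b = wdist C w a v + wdist C w v b :=
        wdist_add_of_mem htree pab hpab hvpab
      have e1 : wdist C w a b = wdist C w a (π a) + wdist C w (π a) b := hF1 a b (Ne.symm hab)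
      have e2 : wdist C w a v = wdist C w a (π a) + wdist C w (π a) v :=
        hF1 a v (fun h => hva (congrArg id h))
      by_cases hab' : π a = b
      · exfalso
        have hz : wdist C w (π a) b = 0 := by rw [hab']; exact wdist_self htree b
        have hnn1 : 0 ≤ wdist C w v b := wdist_nonneg htree hw v b
        have hle : wdist C w (π a) v ≤ 0 := by linarith
        exact hva' (eq_of_wdist_nonpos htree hw hle).symm
      · have e3 : wdist C w b (π a) = wdist C w b (π b) + wdist C w (π b) (π a) :=
          hF1 b (π a) hab'
        have e4 : wdist C w b v = wdist C w b (π b) + wdist C w (π b) v :=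
          hF1 b v (fun h => hvb (congrArg id h))
        have c1 : wdist C w v b = wdist C w b v := wdist_comm htree _ _
        have c2 : wdist C w (π a) b = wdist C w b (π a) := wdist_comm htree _ _
        have c3 : wdist C w (π b) (π a) = wdist C w (π a) (π b) := wdist_comm htree _ _
        have c4 : wdist C w (π b) v = wdist C w v (π b) := wdist_comm htree _ _
        have heq : wdist C w (π a) (π b) = wdist C w (π a) v + wdist C w v (π b) := by
          linarith
        exact mem_of_wdist_eq htree hw pab' hpab' heq
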